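/- (Robbins–Siegmund supermartingale convergence, as stated in the paper.) Let (Ω, 𝓕, P) be a probability space with a filtration (𝓖_k)_{k≥0}, and let (y_k), (u_k), (a_k), (b_k) be sequences of nonnegative, integrable random variables adapted to (𝓖_k) such that almost surely, for every k ≥ 0, E[y_{k+1} | 𝓖_k] ≤ (1 + a_k) y_k − u_k + b_k, and almost surely Σ_{k=0}^∞ a_k < ∞ and Σ_{k=0}^∞ b_k < ∞. Then almost surely the sequence (y_k) converges to a (nonnegative, finite) random variable, and Σ_{k=0}^∞ u_k < ∞. -/

import Mathlib

open MeasureTheory Filter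
open scoped Topology

/-- (Robbins–Siegmund supermartingale convergence.) If nonnegative integrable
adapted sequences `y, u, a, b` satisfy
`E[y (k+1) | 𝓖 k] ≤ (1 + a k) * y k - u k + b k` almost surely for every `k`,
and `Σ a k < ∞` and `Σ b k < ∞` almost surely, then almost surely `y k`
converges to a nonnegative (finite) limit and `Σ u k < ∞`. -/
theorem robbins_siegmund
    {Ω : Type*} {m : MeasurableSpace Ω} (P : Measure Ω) [IsProbabilityMeasure P]
    (𝓖 : Filtration ℕ m)
    (y u a b : ℕ → Ω → ℝ)
    (hy_nonneg : ∀ k, ∀ ω, 0 ≤ y k ω) (hu_nonneg : ∀ k, ∀ ω, 0 ≤ u k ω)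
    (ha_nonneg : ∀ k, ∀ ω, 0 ≤ a k ω) (hb_nonneg : ∀ k, ∀ ω, 0 ≤ b k ω)
    (hy_int : ∀ k, Integrable (y k) P) (hu_int : ∀ k, Integrable (u k) P)
    (ha_int : ∀ k, Integrable (a k) P) (hb_int : ∀ k, Integrable (b k) P)
    (hy_adp : Adapted 𝓖 y) (hu_adp : Adapted 𝓖 u)
    (ha_adp : Adapted 𝓖 a) (hb_adp : Adapted 𝓖 b)
    (hrec : ∀ k, ∀ᵐ ω ∂P,
      (P[y (k + 1) | 𝓖 k]) ω ≤ (1 + a k ω) * y k ω - u k ω + b k ω)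
    (ha_sum : ∀ᵐ ω ∂P, Summable fun k => a k ω)
    (hb_sum : ∀ᵐ ω ∂P, Summable fun k => b k ω) :
    ∀ᵐ ω ∂P,
      (∃ c : ℝ, 0 ≤ c ∧ Tendsto (fun k => y k ω) atTop (𝓝 c)) ∧
        Summable fun k => u k ω := by
  -- the compensating product process
  obtain ⟨A, hA_def⟩ : ∃ A : ℕ → Ω → ℝ,
      A = fun k ω => ∏ j ∈ Finset.range k, (1 + a j ω) := ⟨_, rfl⟩
  have hA1 : ∀ k ω, (1:ℝ) ≤ A k ω := by
    intro k ω
    rw [hA_def]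
    calc (1:ℝ) = ∏ _j ∈ Finset.range k, (1:ℝ) := by simp
      _ ≤ ∏ j ∈ Finset.range k, (1 + a j ω) :=
        Finset.prod_le_prod (fun j _ => zero_le_one) (fun j _ => by linarith [ha_nonneg j ω])
  have hA_pos : ∀ k ω, (0:ℝ) < A k ω := fun k ω => lt_of_lt_of_le one_pos (hA1 k ω)
  have hA_succ : ∀ k ω, A (k + 1) ω = A k ω * (1 + a k ω) := by
    intro k ω
    rw [hA_def]
    exact Finset.prod_range_succ _ _
  have hA_mono : ∀ ω, Monotone fun k => A k ω := by
    intro ω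
    refine monotone_nat_of_le_succ fun k => ?_
    have := hA_pos k ω
    have := ha_nonneg k ω
    rw [hA_succ]
    nlinarith
  have hA_meas : ∀ k i, k ≤ i + 1 → Measurable[𝓖 i] (A k) := by
    intro k i hk
    rw [hA_def]
    apply Finset.measurable_prod
    intro j hj
    rw [Finset.mem_range] at hj
    exact measurable_const.add
      ((ha_adp j).mono (𝓖.mono (by omega)) le_rfl)
  have hA_measM : ∀ k, Measurable (A k) :=
    fun k => (hA_meas k k (Nat.le_succ k)).mono (𝓖.le k) le_rfl
  -- integrability of quotients
  have hdiv_int : ∀ {f : Ω → ℝ}, Integrable f P → (∀ ω, 0 ≤ f ω) → ∀ j,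
      Integrable (fun ω => f ω / A j ω) P := by
    intro f hf hf0 j
    refine hf.mono (hf.aemeasurable.div
      (hA_measM j).aemeasurable).aestronglyMeasurable (ae_of_all _ fun ω => ?_)
    have h1 : 0 ≤ f ω / A j ω := div_nonneg (hf0 ω) (hA_pos j ω).le
    rw [Real.norm_eq_abs, Real.norm_eq_abs, abs_of_nonneg h1, abs_of_nonneg (hf0 ω)]
    exact div_le_self (hf0 ω) (hA1 j ω)
  -- the auxiliary processes
  obtain ⟨z, hz_def⟩ : ∃ z : ℕ → Ω → ℝ, z = fun k ω =>
      y k ω / A k ω + ∑ j ∈ Finset.range k, (u j ω - b j ω) / A (j + 1) ω := ⟨_, rfl⟩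
  obtain ⟨s, hs_def⟩ : ∃ s : ℕ → Ω → ℝ, s = fun k ω =>
      ∑ j ∈ Finset.range k, b j ω / A (j + 1) ω := ⟨_, rfl⟩
  obtain ⟨t, ht_def⟩ : ∃ t : ℕ → Ω → ℝ, t = fun k ω =>
      ∑ j ∈ Finset.range k, u j ω / A (j + 1) ω := ⟨_, rfl⟩
  have hzst : ∀ k ω, z k ω + s k ω = y k ω / A k ω + t k ω := by
    intro k ω
    simp only [hz_def, hs_def, ht_def]
    rw [add_assoc, ← Finset.sum_add_distrib]
    congr 1
    refine Finset.sum_congr rfl fun j _ => ?_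
    rw [sub_div]
    ring
  have hs_mono : ∀ ω, Monotone fun k => s k ω := by
    intro ω
    refine monotone_nat_of_le_succ fun k => ?_
    simp only [hs_def, Finset.sum_range_succ]
    have : 0 ≤ b k ω / A (k + 1) ω := div_nonneg (hb_nonneg k ω) (hA_pos _ ω).le
    linarith
  have ht_nonneg : ∀ k ω, 0 ≤ t k ω := by
    intro k ω
    rw [ht_def]
    exact Finset.sum_nonneg fun j _ => div_nonneg (hu_nonneg j ω) (hA_pos _ ω).le
  have hs_nonneg : ∀ k ω, 0 ≤ s k ω := by
    intro k ω
    rw [hs_def]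
    exact Finset.sum_nonneg fun j _ => div_nonneg (hb_nonneg j ω) (hA_pos _ ω).le
  have hz_lb : ∀ k ω, -(s k ω) ≤ z k ω := by
    intro k ω
    have h1 := hzst k ω
    have h2 : 0 ≤ y k ω / A k ω := div_nonneg (hy_nonneg k ω) (hA_pos _ ω).le
    have h3 := ht_nonneg k ω
    linarith
  -- measurability of the processes
  have hz_meas : ∀ k, Measurable[𝓖 k] (z k) := by
    intro k
    rw [hz_def]
    refine Measurable.add (Measurable.div (hy_adp k) (hA_meas k k (Nat.le_succ k)))
      (Finset.measurable_sum _ fun j hj => ?_)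
    rw [Finset.mem_range] at hj
    exact Measurable.div
      (Measurable.sub ((hu_adp j).mono (𝓖.mono (by omega)) le_rfl)
        ((hb_adp j).mono (𝓖.mono (by omega)) le_rfl))
      (hA_meas (j + 1) k (by omega))
  have hs_meas : ∀ k i, k ≤ i + 1 → Measurable[𝓖 i] (s k) := by
    intro k i hk
    rw [hs_def]
    refine Finset.measurable_sum _ fun j hj => ?_
    rw [Finset.mem_range] at hj
    exact Measurable.div ((hb_adp j).mono (𝓖.mono (by omega)) le_rfl)
      (hA_meas (j + 1) i (by omega))
  -- integrability of the processes
  have hz_int : ∀ k, Integrable (z k) P := by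
    intro k
    rw [hz_def]
    refine Integrable.add (hdiv_int (hy_int k) (hy_nonneg k) k)
      (integrable_finset_sum _ fun j _ => ?_)
    have : (fun ω => (u j ω - b j ω) / A (j + 1) ω)
        = fun ω => u j ω / A (j + 1) ω - b j ω / A (j + 1) ω := by
      funext ω; rw [sub_div]
    rw [this]
    exact (hdiv_int (hu_int j) (hu_nonneg j) (j + 1)).sub
      (hdiv_int (hb_int j) (hb_nonneg j) (j + 1))
  -- the supermartingale inequality for z
  have hz_cond : ∀ k, P[z (k + 1) | 𝓖 k] ≤ᵐ[P] z k := by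
    intro k
    have hle : (𝓖 k : MeasurableSpace Ω) ≤ m := 𝓖.le k
    have hinv_meas : Measurable[𝓖 k] fun ω => (A (k + 1) ω)⁻¹ :=
      (hA_meas (k + 1) k le_rfl).inv
    have hw_meas : Measurable[𝓖 k]
        fun ω => ∑ j ∈ Finset.range (k + 1), (u j ω - b j ω) / A (j + 1) ω := by
      refine Finset.measurable_sum _ fun j hj => ?_
      rw [Finset.mem_range] at hj
      exact Measurable.div
        (Measurable.sub ((hu_adp j).mono (𝓖.mono (by omega)) le_rfl)
          ((hb_adp j).mono (𝓖.mono (by omega)) le_rfl))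
        (hA_meas (j + 1) k (by omega))
    have hw_int : Integrable
        (fun ω => ∑ j ∈ Finset.range (k + 1), (u j ω - b j ω) / A (j + 1) ω) P := by
      refine integrable_finset_sum _ fun j _ => ?_
      have h0 : (fun ω => (u j ω - b j ω) / A (j + 1) ω)
          = fun ω => u j ω / A (j + 1) ω - b j ω / A (j + 1) ω := by
        funext ω; rw [sub_div]
      rw [h0]
      exact (hdiv_int (hu_int j) (hu_nonneg j) (j + 1)).sub
        (hdiv_int (hb_int j) (hb_nonneg j) (j + 1))
    have hmul_int : Integrable ((fun ω => (A (k + 1) ω)⁻¹) * y (k + 1)) P := by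
      have h0 : ((fun ω => (A (k + 1) ω)⁻¹) * y (k + 1))
          = fun ω => y (k + 1) ω / A (k + 1) ω := by
        funext ω
        simp only [Pi.mul_apply]
        rw [div_eq_inv_mul]
      rw [h0]
      exact hdiv_int (hy_int (k + 1)) (hy_nonneg (k + 1)) (k + 1)
    have e : z (k + 1) = ((fun ω => (A (k + 1) ω)⁻¹) * y (k + 1)) +
        fun ω => ∑ j ∈ Finset.range (k + 1), (u j ω - b j ω) / A (j + 1) ω := by
      funext ω
      rw [hz_def]
      simp only [Pi.add_apply, Pi.mul_apply]
      rw [div_eq_inv_mul]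
    have h1 : P[z (k + 1)|𝓖 k] =ᵐ[P]
        ((fun ω => (A (k + 1) ω)⁻¹) * P[y (k + 1)|𝓖 k]) +
          fun ω => ∑ j ∈ Finset.range (k + 1), (u j ω - b j ω) / A (j + 1) ω := by
      rw [e]
      refine (condExp_add hmul_int hw_int (𝓖 k)).trans ?_
      have h2 := condExp_mul_of_stronglyMeasurable_left (hinv_meas.stronglyMeasurable)
        hmul_int (hy_int (k + 1))
      have h3 : P[(fun ω => ∑ j ∈ Finset.range (k + 1), (u j ω - b j ω) / A (j + 1) ω)|𝓖 k]
          = fun ω => ∑ j ∈ Finset.range (k + 1), (u j ω - b j ω) / A (j + 1) ω :=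
        condExp_of_stronglyMeasurable hle hw_meas.stronglyMeasurable hw_int
      rw [h3]
      exact EventuallyEq.add h2 (EventuallyEq.refl _ _)
    filter_upwards [h1, hrec k] with ω h1ω h2ω
    rw [h1ω]
    simp only [Pi.add_apply, Pi.mul_apply]
    rw [hz_def]
    simp only
    rw [Finset.sum_range_succ]
    have hA1k := hA_succ k ω
    have hAkpos := hA_pos k ω
    have hak := ha_nonneg k ω
    have h3 : (A (k + 1) ω)⁻¹ * (P[y (k + 1)|𝓖 k]) ω ≤
        (A (k + 1) ω)⁻¹ * ((1 + a k ω) * y k ω - u k ω + b k ω) :=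
      mul_le_mul_of_nonneg_left h2ω (inv_nonneg.2 (hA_pos (k + 1) ω).le)
    have h4 : (A (k + 1) ω)⁻¹ * ((1 + a k ω) * y k ω - u k ω + b k ω)
        + (u k ω - b k ω) / A (k + 1) ω = y k ω / A k ω := by
      rw [hA1k]
      have h5 : A k ω ≠ 0 := hAkpos.ne'
      have h6 : (1 : ℝ) + a k ω ≠ 0 := by positivity
      field_simp
      ring
    linarith
  -- main convergence step via stopped processes
  have hg_conv : ∀ n : ℕ, ∀ᵐ ω ∂P,
      (∀ k, s (k + 1) ω ≤ (n : ℝ)) → ∃ c, Tendsto (fun k => z k ω) atTop (𝓝 c) := by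
    intro n
    obtain ⟨χ, hχ_def⟩ : ∃ χ : ℕ → Ω → ℝ,
        χ = fun i ω => if s (i + 1) ω ≤ (n : ℝ) then (1:ℝ) else 0 := ⟨_, rfl⟩
    obtain ⟨g, hg_def⟩ : ∃ g : ℕ → Ω → ℝ, g = fun k ω =>
        z 0 ω + ∑ i ∈ Finset.range k, χ i ω * (z (i + 1) ω - z i ω) := ⟨_, rfl⟩
    have hχ_meas : ∀ i, Measurable[𝓖 i] (χ i) := by
      intro i
      rw [hχ_def]
      exact Measurable.ite (measurableSet_le (hs_meas (i + 1) i le_rfl) measurable_const)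
        measurable_const measurable_const
    have hχ01 : ∀ i ω, 0 ≤ χ i ω ∧ χ i ω ≤ 1 := by
      intro i ω
      rw [hχ_def]
      dsimp only
      split <;> norm_num
    have hterm_meas : ∀ i, Measurable[𝓖 (i + 1)]
        fun ω => χ i ω * (z (i + 1) ω - z i ω) := fun i =>
      ((hχ_meas i).mono (𝓖.mono (Nat.le_succ i)) le_rfl).mul
        ((hz_meas (i + 1)).sub ((hz_meas i).mono (𝓖.mono (Nat.le_succ i)) le_rfl))
    have hg_meas : ∀ k, Measurable[𝓖 k] (g k) := by
      intro k
      rw [hg_def]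
      refine ((hz_meas 0).mono (𝓖.mono (Nat.zero_le k)) le_rfl).add
        (Finset.measurable_sum _ fun i hi => ?_)
      rw [Finset.mem_range] at hi
      exact (hterm_meas i).mono (𝓖.mono (by omega)) le_rfl
    have hterm_int : ∀ i, Integrable (χ i * (z (i + 1) - z i)) P := by
      intro i
      have h0 : (χ i * (z (i + 1) - z i)) = fun ω => χ i ω * (z (i + 1) ω - z i ω) := rfl
      rw [h0]
      refine Integrable.bdd_mul ((hz_int (i + 1)).sub (hz_int i))
        (((hχ_meas i).mono (𝓖.le i) le_rfl).aestronglyMeasurable) (c := 1) (ae_of_all _ fun ω => ?_)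
      rw [Real.norm_eq_abs, abs_le]
      constructor <;> linarith [(hχ01 i ω).1, (hχ01 i ω).2]
    have hg_int : ∀ k, Integrable (g k) P := by
      intro k
      rw [hg_def]
      refine (hz_int 0).add (integrable_finset_sum _ fun i _ => ?_)
      exact hterm_int i
    have hg_succ : ∀ k, g (k + 1) = g k + χ k * (z (k + 1) - z k) := by
      intro k
      funext ω
      rw [hg_def]
      simp only [Pi.add_apply, Pi.mul_apply, Pi.sub_apply, Finset.sum_range_succ]
      ring
    have hg_cond : ∀ k, P[g (k + 1)|𝓖 k] ≤ᵐ[P] g k := by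
      intro k
      rw [hg_succ k]
      have h1 : P[g k|𝓖 k] = g k :=
        condExp_of_stronglyMeasurable (𝓖.le k) (hg_meas k).stronglyMeasurable (hg_int k)
      have h2 : P[χ k * (z (k + 1) - z k)|𝓖 k] =ᵐ[P] χ k * P[z (k + 1) - z k|𝓖 k] :=
        condExp_mul_of_stronglyMeasurable_left (hχ_meas k).stronglyMeasurable (hterm_int k)
          ((hz_int (k + 1)).sub (hz_int k))
      have h3 : P[z (k + 1) - z k|𝓖 k] =ᵐ[P] P[z (k + 1)|𝓖 k] - z k := by
        refine (condExp_sub (hz_int (k + 1)) (hz_int k) (𝓖 k)).trans ?_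
        rw [condExp_of_stronglyMeasurable (𝓖.le k) (hz_meas k).stronglyMeasurable (hz_int k)]
      filter_upwards [condExp_add (hg_int k) (hterm_int k) (𝓖 k), h2, h3, hz_cond k]
        with ω e1 e2 e3 e4
      rw [e1]
      simp only [Pi.add_apply, Pi.mul_apply, Pi.sub_apply] at *
      rw [congrFun h1 ω, e2, e3]
      have h5 : χ k ω * ((P[z (k + 1)|𝓖 k]) ω - z k ω) ≤ 0 :=
        mul_nonpos_of_nonneg_of_nonpos (hχ01 k ω).1 (by linarith)
      linarith
    have hg_adp : StronglyAdapted 𝓖 g := fun k => (hg_meas k).stronglyMeasurable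
    have hg_sup : Supermartingale g 𝓖 P := supermartingale_nat hg_adp hg_int hg_cond
    have hEg : ∀ k, ∫ ω, g k ω ∂P ≤ ∫ ω, g 0 ω ∂P := by
      intro k
      induction k with
      | zero => exact le_rfl
      | succ k ih =>
        have h1 : ∫ ω, g (k + 1) ω ∂P = ∫ ω, (P[g (k + 1)|𝓖 k]) ω ∂P :=
          (integral_condExp (𝓖.le k)).symm
        rw [h1]
        exact le_trans (integral_mono_ae integrable_condExp (hg_int k) (hg_cond k)) ih
    have hP1 : ∀ ω k, s k ω ≤ (n : ℝ) → g k ω = z k ω := by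
      intro ω k
      induction k with
      | zero =>
        intro _
        rw [hg_def]
        simp
      | succ k ih =>
        intro hk
        have hk' : s k ω ≤ (n : ℝ) := le_trans (hs_mono ω (Nat.le_succ k)) hk
        have hχ1 : χ k ω = 1 := by
          rw [hχ_def]
          exact if_pos hk
        rw [hg_succ k]
        simp only [Pi.add_apply, Pi.mul_apply, Pi.sub_apply]
        rw [ih hk', hχ1]
        ring
    have hP2 : ∀ ω k, ∃ m', g k ω = z m' ω ∧ s m' ω ≤ (n : ℝ) := by
      intro ω k
      induction k with
      | zero =>
        refine ⟨0, by rw [hg_def]; simp, ?_⟩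
        have h0 : s 0 ω = 0 := by rw [hs_def]; simp
        rw [h0]
        exact Nat.cast_nonneg n
      | succ k ih =>
        by_cases h : s (k + 1) ω ≤ (n : ℝ)
        · exact ⟨k + 1, hP1 ω (k + 1) h, h⟩
        · obtain ⟨m', hm1, hm2⟩ := ih
          refine ⟨m', ?_, hm2⟩
          have hχ0 : χ k ω = 0 := by
            rw [hχ_def]
            exact if_neg h
          rw [hg_succ k]
          simp only [Pi.add_apply, Pi.mul_apply, Pi.sub_apply]
          rw [hχ0, hm1]
          ring
    have hlow : ∀ k ω, -(n : ℝ) ≤ g k ω := by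
      intro k ω
      obtain ⟨m', hm1, hm2⟩ := hP2 ω k
      rw [hm1]
      linarith [hz_lb m' ω]
    have hbdd : ∀ k, eLpNorm (g k) 1 P ≤ ENNReal.ofReal ((∫ ω, g 0 ω ∂P) + 2 * n) := by
      intro k
      have h1 : eLpNorm (g k) 1 P = ENNReal.ofReal (∫ ω, ‖g k ω‖ ∂P) := by
        rw [eLpNorm_one_eq_lintegral_enorm,
          ← ofReal_integral_norm_eq_lintegral_enorm (hg_int k)]
      rw [h1]
      apply ENNReal.ofReal_le_ofReal
      have hn0 : (0 : ℝ) ≤ (n : ℝ) := Nat.cast_nonneg n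
      have h2 : ∀ ω, ‖g k ω‖ ≤ g k ω + 2 * n := by
        intro ω
        have := hlow k ω
        rw [Real.norm_eq_abs]
        rcases abs_cases (g k ω) with ⟨h, _⟩ | ⟨h, _⟩ <;> linarith
      calc ∫ ω, ‖g k ω‖ ∂P ≤ ∫ ω, (g k ω + 2 * n) ∂P :=
            integral_mono (hg_int k).norm ((hg_int k).add (integrable_const _)) h2
        _ = (∫ ω, g k ω ∂P) + 2 * n := by
            rw [integral_add (hg_int k) (integrable_const _), integral_const]
            simp
        _ ≤ (∫ ω, g 0 ω ∂P) + 2 * n := by linarith [hEg k]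
    have hsubm : Submartingale (-g) 𝓖 P := hg_sup.neg
    have hbdd' : ∀ k, eLpNorm ((-g) k) 1 P ≤
        (Real.toNNReal ((∫ ω, g 0 ω ∂P) + 2 * n) : ENNReal) := by
      intro k
      have h0 : (-g) k = -(g k) := rfl
      rw [h0, eLpNorm_neg]
      exact hbdd k
    have hconv := hsubm.exists_ae_tendsto_of_bdd hbdd'
    filter_upwards [hconv] with ω hcω hsn
    obtain ⟨c, hc⟩ := hcω
    have hgz : ∀ k, g k ω = z k ω := by
      intro k
      cases k with
      | zero => rw [hg_def]; simp
      | succ k => exact hP1 ω (k + 1) (hsn k)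
    refine ⟨-c, ?_⟩
    refine hc.neg.congr fun k => ?_
    show -((-g) k ω) = z k ω
    simp [hgz k]
  -- pointwise endgame
  filter_upwards [ae_all_iff.2 hg_conv, ha_sum, hb_sum] with ω hω hsa hsb
  have hbA_sum : Summable fun j => b j ω / A (j + 1) ω := by
    refine Summable.of_nonneg_of_le (fun j => div_nonneg (hb_nonneg j ω) (hA_pos _ ω).le)
      (fun j => div_le_self (hb_nonneg j ω) (hA1 _ ω)) hsb
  obtain ⟨sb, hsb_def⟩ : ∃ x : ℝ, x = ∑' j, b j ω / A (j + 1) ω := ⟨_, rfl⟩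
  have hs_le : ∀ k, s k ω ≤ sb := by
    intro k
    rw [hs_def, hsb_def]
    exact Summable.sum_le_tsum _ (fun j _ => div_nonneg (hb_nonneg j ω) (hA_pos _ ω).le) hbA_sum
  obtain ⟨c, hz_tends⟩ := hω ⌈sb⌉₊ fun k => (hs_le (k + 1)).trans (Nat.le_ceil sb)
  -- convergence of A
  have hA_bdd : BddAbove (Set.range fun k => A k ω) := by
    refine ⟨Real.exp (∑' j, a j ω), ?_⟩
    rintro x ⟨k, rfl⟩
    have h1 : ∀ j ∈ Finset.range k, (0:ℝ) ≤ 1 + a j ω := fun j _ => by linarith [ha_nonneg j ω]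
    have h2 : ∀ j ∈ Finset.range k, (1:ℝ) + a j ω ≤ Real.exp (a j ω) := fun j _ => by
      linarith [Real.add_one_le_exp (a j ω)]
    have h3 : A k ω ≤ ∏ j ∈ Finset.range k, Real.exp (a j ω) := by
      rw [hA_def]; exact Finset.prod_le_prod h1 h2
    calc A k ω ≤ ∏ j ∈ Finset.range k, Real.exp (a j ω) := h3
      _ = Real.exp (∑ j ∈ Finset.range k, a j ω) := (Real.exp_sum _ _).symm
      _ ≤ Real.exp (∑' j, a j ω) := Real.exp_le_exp.2
          (Summable.sum_le_tsum _ (fun j _ => ha_nonneg j ω) hsa)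
  obtain ⟨Ainf, hAinf_def⟩ : ∃ x : ℝ, x = ⨆ k, A k ω := ⟨_, rfl⟩
  have hA_tends : Tendsto (fun k => A k ω) atTop (𝓝 Ainf) := by
    rw [hAinf_def]; exact tendsto_atTop_ciSup (hA_mono ω) hA_bdd
  have hA_le : ∀ k, A k ω ≤ Ainf := fun k => hAinf_def ▸ le_ciSup hA_bdd k
  have hAinf_pos : (0:ℝ) < Ainf := lt_of_lt_of_le one_pos ((hA1 0 ω).trans (hA_le 0))
  -- convergence of s
  have hs_tends : Tendsto (fun k => s k ω) atTop (𝓝 sb) := by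
    rw [hs_def, hsb_def]; exact hbA_sum.hasSum.tendsto_sum_nat
  have hzs_tends : Tendsto (fun k => z k ω + s k ω) atTop (𝓝 (c + sb)) :=
    hz_tends.add hs_tends
  -- summability of u / A
  have huA_sum : Summable fun j => u j ω / A (j + 1) ω := by
    obtain ⟨M, hM⟩ := hzs_tends.bddAbove_range
    refine summable_of_sum_range_le (c := M)
      (fun j => div_nonneg (hu_nonneg j ω) (hA_pos _ ω).le) (fun k => ?_)
    have h0 : ∑ i ∈ Finset.range k, u i ω / A (i + 1) ω = t k ω := by rw [ht_def]
    rw [h0]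
    have h2 := hzst k ω
    have h3 : 0 ≤ y k ω / A k ω := div_nonneg (hy_nonneg k ω) (hA_pos _ ω).le
    have h4 : z k ω + s k ω ≤ M := hM ⟨k, rfl⟩
    linarith
  obtain ⟨tu, htu_def⟩ : ∃ x : ℝ, x = ∑' j, u j ω / A (j + 1) ω := ⟨_, rfl⟩
  have ht_tends : Tendsto (fun k => t k ω) atTop (𝓝 tu) := by
    rw [ht_def, htu_def]; exact huA_sum.hasSum.tendsto_sum_nat
  -- convergence of y / A and y
  have hyA_tends : Tendsto (fun k => y k ω / A k ω) atTop (𝓝 (c + sb - tu)) := by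
    refine (hzs_tends.sub ht_tends).congr fun k => ?_
    have := hzst k ω
    linarith
  have hL0 : 0 ≤ c + sb - tu :=
    ge_of_tendsto' hyA_tends fun k => div_nonneg (hy_nonneg k ω) (hA_pos _ ω).le
  have hy_tends : Tendsto (fun k => y k ω) atTop (𝓝 ((c + sb - tu) * Ainf)) := by
    refine (hyA_tends.mul hA_tends).congr fun k => ?_
    exact div_mul_cancel₀ _ (hA_pos k ω).ne'
  refine ⟨⟨(c + sb - tu) * Ainf, mul_nonneg hL0 hAinf_pos.le, hy_tends⟩, ?_⟩
  refine Summable.of_nonneg_of_le (fun j => hu_nonneg j ω) (fun j => ?_)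
    (huA_sum.mul_right Ainf)
  have h1 : u j ω = u j ω / A (j + 1) ω * A (j + 1) ω :=
    (div_mul_cancel₀ _ (hA_pos (j + 1) ω).ne').symm
  exact h1.le.trans (mul_le_mul_of_nonneg_left (hA_le (j + 1))
    (div_nonneg (hu_nonneg j ω) (hA_pos _ ω).le))
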